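/- Let (G,ν) be a connected deformation graph with more than one vertex. Then the two distance components of any representation gradation of G have the same cardinality; equivalently, every representation matrix of (G,ν) is a square matrix. -/

import Mathlib

/-- A gradation on a simple graph: adjacent vertices have values differing by ±1. -/
def IsGradation {V : Type*} (G : SimpleGraph V) (f : V → ℤ) : Prop :=
  ∀ ⦃a b : V⦄, G.Adj a b → f a - f b = 1 ∨ f a - f b = -1

/-- A connection on a graph: a symmetric integer function nonzero exactly on edges. -/
def IsConnection {V : Type*} (G : SimpleGraph V) (ν : V → V → ℤ) : Prop :=
  (∀ a b : V, ν a b = ν b a) ∧ ∀ a b : V, ν a b ≠ 0 ↔ G.Adj a b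

/-- A deformable connection: `∑_c ν a c * ν c b = 0` for all vertices at distance 2. -/
def IsDeformable {V : Type*} [Fintype V] (G : SimpleGraph V) (ν : V → V → ℤ) : Prop :=
  ∀ a b : V, G.dist a b = 2 → (∑ c : V, ν a c * ν c b) = 0

/-- Auxiliary: one inequality between the sizes of the two parts. -/
theorem aux_card_le {V : Type*} [Fintype V] [DecidableEq V] (G : SimpleGraph V) (ν : V → V → ℤ)
    (hcon : IsConnection G ν) (hdef : IsDeformable G ν)
    (hconn : G.Connected) (hcard : 1 < Fintype.card V)
    (p q : V → Prop) [DecidablePred p] [DecidablePred q]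
    (hpq : ∀ v, p v ↔ ¬ q v)
    (hadj : ∀ a b, G.Adj a b → (p a ∧ q b) ∨ (q a ∧ p b)) :
    Fintype.card {v // p v} ≤ Fintype.card {v // q v} := by
  classical
  -- every vertex has a neighbor
  have hnbr : ∀ a : V, ∃ b, G.Adj a b := by
    intro a
    obtain ⟨b, hb⟩ := Fintype.exists_ne_of_one_lt_card hcard a
    obtain ⟨w⟩ := hconn.preconnected a b
    cases w with
    | nil => exact absurd rfl hb
    | cons h _ => exact ⟨_, h⟩
  -- off-diagonal sums vanish (between vertices in the same part)
  have two_sum : ∀ a b : V, a ≠ b → (p a ↔ p b) → (∑ c : V, ν a c * ν c b) = 0 := by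
    intro a b hab hpab
    by_cases hc : ∃ c, ν a c * ν c b ≠ 0
    · obtain ⟨c, hc⟩ := hc
      have hac : G.Adj a c := (hcon.2 a c).mp (left_ne_zero_of_mul hc)
      have hcb : G.Adj c b := (hcon.2 c b).mp (right_ne_zero_of_mul hc)
      have hnadj : ¬ G.Adj a b := by
        intro h
        rcases hadj a b h with ⟨h1, h2⟩ | ⟨h1, h2⟩
        · exact (hpq b).mp (hpab.mp h1) h2
        · exact (hpq a).mp (hpab.mpr h2) h1
      apply hdef
      have hle : G.dist a b ≤ 2 := by
        have := SimpleGraph.dist_le (hac.toWalk.append hcb.toWalk)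
        simpa using this
      have hpos := hconn.pos_dist_of_ne hab
      have h1 : G.dist a b ≠ 1 := fun h => hnadj (SimpleGraph.dist_eq_one_iff_adj.mp h)
      omega
    · push_neg at hc
      exact Finset.sum_eq_zero fun c _ => hc c
  -- diagonal sums are nonzero
  have hdiag : ∀ a : V, (∑ c : V, ν a c * ν c a) ≠ 0 := by
    intro a
    obtain ⟨b, hb⟩ := hnbr a
    have hb' : ν a b ≠ 0 := (hcon.2 a b).mpr hb
    have hpos : 0 < ∑ c : V, ν a c * ν c a := by
      apply Finset.sum_pos'
      · intro c _
        rw [hcon.1 c a]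
        exact mul_self_nonneg _
      · exact ⟨b, Finset.mem_univ b, by rw [hcon.1 b a]; exact mul_self_pos.mpr hb'⟩
    omega
  -- the representation matrix over ℚ
  set M : Matrix {v // q v} {v // p v} ℚ := fun w v => ((ν w.1 v.1 : ℤ) : ℚ) with hM
  have hinj : Function.Injective M.mulVecLin := by
    rw [injective_iff_map_eq_zero]
    intro x hx
    funext u
    have h0 : ∑ w : {v // q v}, ((ν u.1 w.1 : ℤ) : ℚ) * (M.mulVecLin x) w = 0 := by
      rw [hx]; simp
    have h1 : ∑ w : {v // q v}, ((ν u.1 w.1 : ℤ) : ℚ) * (M.mulVecLin x) w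
        = ∑ v : {v // p v}, (∑ w : {v // q v}, ((ν u.1 w.1 * ν w.1 v.1 : ℤ) : ℚ)) * x v := by
      rw [Matrix.mulVecLin_apply]
      simp only [Matrix.mulVecLin_apply, Matrix.mulVec, dotProduct, Finset.mul_sum, hM]
      rw [Finset.sum_comm]
      refine Finset.sum_congr rfl fun v _ => ?_
      rw [Finset.sum_mul]
      refine Finset.sum_congr rfl fun w _ => ?_
      push_cast
      ring
    have h2 : ∀ v : {v // p v},
        (∑ w : {v // q v}, ν u.1 w.1 * ν w.1 v.1) = ∑ c : V, ν u.1 c * ν c v.1 := by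
      intro v
      rw [← Finset.sum_subtype (Finset.univ.filter q) (fun c => by simp)
        (fun c => ν u.1 c * ν c v.1)]
      apply Finset.sum_filter_of_ne
      intro c _ hne
      have hadj' : G.Adj u.1 c := (hcon.2 _ _).mp (left_ne_zero_of_mul hne)
      rcases hadj u.1 c hadj' with ⟨_, h⟩ | ⟨h, _⟩
      · exact h
      · exact absurd h ((hpq u.1).mp u.2)
    have h3 : ∀ v : {v // p v}, (∑ w : {v // q v}, ν u.1 w.1 * ν w.1 v.1)
        = if u = v then ∑ c : V, ν u.1 c * ν c u.1 else 0 := by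
      intro v
      rw [h2 v]
      by_cases h : u = v
      · subst h; simp
      · rw [if_neg h]
        exact two_sum u.1 v.1 (fun he => h (Subtype.ext he)) (iff_of_true u.2 v.2)
    have h4 : ((∑ c : V, ν u.1 c * ν c u.1 : ℤ) : ℚ) * x u = 0 := by
      rw [← h0, h1]
      have : ∀ v : {v // p v}, (∑ w : {v // q v}, ((ν u.1 w.1 * ν w.1 v.1 : ℤ) : ℚ))
          = if u = v then ((∑ c : V, ν u.1 c * ν c u.1 : ℤ) : ℚ) else 0 := by
        intro v
        rw [← Int.cast_sum, h3 v, apply_ite (Int.cast : ℤ → ℚ), Int.cast_zero]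
      simp_rw [this, ite_mul, zero_mul]
      rw [Finset.sum_ite_eq]
      simp
    have hd : ((∑ c : V, ν u.1 c * ν c u.1 : ℤ) : ℚ) ≠ 0 := by
      exact_mod_cast hdiag u.1
    have := mul_eq_zero.mp h4
    tauto
  calc Fintype.card {v // p v}
      = Module.finrank ℚ ({v // p v} → ℚ) := (Module.finrank_fintype_fun_eq_card ℚ).symm
    _ ≤ Module.finrank ℚ ({v // q v} → ℚ) := LinearMap.finrank_le_finrank_of_injective hinj
    _ = Fintype.card {v // q v} := Module.finrank_fintype_fun_eq_card ℚ

/-- For a connected deformation graph with more than one vertex, the two distance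
components of any representation gradation have the same cardinality, i.e. every
representation matrix is square. -/
theorem representation_matrix_is_square
    {V : Type*} [Fintype V] [DecidableEq V] (G : SimpleGraph V) (ν : V → V → ℤ)
    (hcon : IsConnection G ν) (hdef : IsDeformable G ν)
    (hconn : G.Connected) (hcard : 1 < Fintype.card V)
    (g : V → ℤ) (hg : IsGradation G g) (hg01 : ∀ v : V, g v = 0 ∨ g v = 1) :
    Fintype.card {v : V // g v = 0} = Fintype.card {v : V // g v = 1} := by
  apply le_antisymm
  · exact aux_card_le G ν hcon hdef hconn hcard (fun v => g v = 0) (fun v => g v = 1)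
      (fun v => by have := hg01 v; omega)
      (fun a b hab => by have := hg hab; have := hg01 a; have := hg01 b; omega)
  · exact aux_card_le G ν hcon hdef hconn hcard (fun v => g v = 1) (fun v => g v = 0)
      (fun v => by have := hg01 v; omega)
      (fun a b hab => by have := hg hab; have := hg01 a; have := hg01 b; omega)
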